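/- Let A be a real d×d matrix and let φ(t,0;x) denote the globally defined flow of x' = Ax + f(x), where f : ℝ^d → ℝ^d is continuous and such that solutions are globally defined and unique (so that φ(t+s,0;x) = φ(t,0;φ(s,0;x)) for all t,s,x). Suppose h : ℝ^d → ℝ^d is continuous and conjugates the time-one map to the linear time-one map: h(φ(1,0;x)) = e^{A}h(x) for all x ∈ ℝ^d. Define H̃(x) := ∫_0^1 e^{As} h(φ(−s,0;x)) ds. Then e^{At}H̃(x) = H̃(φ(t,0;x)) for all t ∈ ℝ and x ∈ ℝ^d; that is, H̃ intertwines the nonlinear flow with the linear flow e^{At}. -/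

import Mathlib

/- STATEMENT 19: If a continuous map h conjugates the time-one map of the flow of
x' = Ax + f(x) to the linear time-one map e^{A}, then the average
H̃(x) = ∫_0^1 e^{As} h(φ(−s,0;x)) ds intertwines the nonlinear flow with the linear
flow: e^{At} H̃(x) = H̃(φ(t,0;x)) for all t and x. -/

noncomputable section

/-- `ℝ^d` -/
abbrev Ed (d : ℕ) := Fin d → ℝ

/-- The continuous linear operator on `ℝ^d` induced by a matrix. -/
def matCLM {d : ℕ} (A : Matrix (Fin d) (Fin d) ℝ) : Ed d →L[ℝ] Ed d :=
  LinearMap.toContinuousLinearMap A.mulVecLin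

theorem averaged_conjugacy_intertwines_flows (d : ℕ)
    (A : Matrix (Fin d) (Fin d) ℝ)
    -- the globally defined flow φ(t,0;x) of x' = Ax + f(x)
    (f : Ed d → Ed d) (hf_cont : Continuous f)
    (φ : ℝ → Ed d → Ed d)
    (hφ0 : ∀ x, φ 0 x = x)
    (hφ_sol : ∀ t x, HasDerivAt (fun s => φ s x) (matCLM A (φ t x) + f (φ t x)) t)
    (hφ_cont : ∀ x, Continuous fun t => φ t x)
    (hφ_flow : ∀ t s x, φ (t + s) x = φ t (φ s x))
    -- h is continuous and conjugates the time-one maps: h(φ(1,0;x)) = e^A h(x)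
    (h : Ed d → Ed d) (hh_cont : Continuous h)
    (hconj : ∀ x, h (φ 1 x) = NormedSpace.exp (matCLM A) (h x)) :
    -- then H̃(x) := ∫_0^1 e^{As} h(φ(−s,0;x)) ds satisfies
    -- e^{At} H̃(x) = H̃(φ(t,0;x)) for all t ∈ ℝ and x ∈ ℝ^d
    ∀ (t : ℝ) (x : Ed d),
      NormedSpace.exp (t • matCLM A)
          (∫ s in (0 : ℝ)..1, NormedSpace.exp (s • matCLM A) (h (φ (-s) x))) =
        ∫ s in (0 : ℝ)..1, NormedSpace.exp (s • matCLM A) (h (φ (-s) (φ t x))) := by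
  intro t x
  let +nondep : NormedAlgebra ℚ (Ed d →L[ℝ] Ed d) := .restrictScalars ℚ ℝ (Ed d →L[ℝ] Ed d)
  set A' := matCLM A with hA'
  set g : ℝ → Ed d := fun u => NormedSpace.exp (u • A') (h (φ (t - u) x)) with hg
  have hcontexp : Continuous fun u : ℝ => NormedSpace.exp (u • A') :=
    NormedSpace.exp_continuous.comp (continuous_id.smul continuous_const)
  have hgc : Continuous g :=
    hcontexp.clm_apply (hh_cont.comp ((hφ_cont x).comp (continuous_const.sub continuous_id)))
  have hper : Function.Periodic g 1 := by
    intro u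
    have hy : φ 1 (φ (t - (u + 1)) x) = φ (t - u) x := by
      rw [← hφ_flow]; ring_nf
    have hc := hconj (φ (t - (u + 1)) x)
    rw [hy] at hc
    have hcom : Commute (u • A') ((1 : ℝ) • A') :=
      ((Commute.refl A').smul_left u).smul_right 1
    simp only [hg]
    rw [show (u + 1) • A' = u • A' + (1 : ℝ) • A' by rw [add_smul], hc,
      NormedSpace.exp_add_of_commute hcom, ContinuousLinearMap.mul_apply, one_smul]
  have hint : IntervalIntegrable (fun s => NormedSpace.exp (s • A') (h (φ (-s) x)))
      MeasureTheory.volume (0 : ℝ) 1 :=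
    (hcontexp.clm_apply (hh_cont.comp ((hφ_cont x).comp continuous_neg))).intervalIntegrable 0 1
  calc NormedSpace.exp (t • A')
        (∫ s in (0 : ℝ)..1, NormedSpace.exp (s • A') (h (φ (-s) x)))
      = ∫ s in (0 : ℝ)..1, NormedSpace.exp (t • A') (NormedSpace.exp (s • A') (h (φ (-s) x))) := by
        rw [ContinuousLinearMap.intervalIntegral_comp_comm _ hint]
    _ = ∫ s in (0 : ℝ)..1, g (s + t) := by
        refine intervalIntegral.integral_congr fun s _ => ?_
        have hcom : Commute (s • A') (t • A') :=
          ((Commute.refl A').smul_left s).smul_right t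
        simp only [hg]
        rw [show t - (s + t) = -s by ring, show (s + t) • A' = t • A' + s • A' by
            rw [add_smul, add_comm],
          NormedSpace.exp_add_of_commute hcom.symm, ContinuousLinearMap.mul_apply]
    _ = ∫ u in t..(1 + t), g u := by
        simp [intervalIntegral.integral_comp_add_right g t]
    _ = ∫ u in (0 : ℝ)..1, g u := by
        have := hper.intervalIntegral_add_eq t 0
        simpa [add_comm] using this
    _ = ∫ s in (0 : ℝ)..1, NormedSpace.exp (s • A') (h (φ (-s) (φ t x))) := by
        refine intervalIntegral.integral_congr fun s _ => ?_
        simp only [hg]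
        rw [show t - s = -s + t by ring, hφ_flow]

end
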